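/- Smooth Koenigs nets and duality (Theorem 'Dual Koenigs net', smooth case): Let N ≥ 1, let f: ℝ² → ℝᴺ and ν: ℝ² → ℝ be twice continuously differentiable with ν nowhere zero. Then for every u ∈ ℝ² the closedness identity ∂₂(∂₁f/ν²)(u) + ∂₁(∂₂f/ν²)(u) = 0 (i.e., the one-form df* with ∂₁f* = ∂₁f/ν² and ∂₂f* = −∂₂f/ν² is closed at u) holds if and only if f satisfies the Koenigs equation ∂₁∂₂f(u) = (∂₂ν(u)/ν(u))·∂₁f(u) + (∂₁ν(u)/ν(u))·∂₂f(u). -/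

import Mathlib

/-- Partial derivative in the first coordinate direction of `ℝ²`. -/
noncomputable def pd1 {E : Type*} [NormedAddCommGroup E] [NormedSpace ℝ E]
    (g : ℝ × ℝ → E) (u : ℝ × ℝ) : E :=
  fderiv ℝ g u (1, 0)

/-- Partial derivative in the second coordinate direction of `ℝ²`. -/
noncomputable def pd2 {E : Type*} [NormedAddCommGroup E] [NormedSpace ℝ E]
    (g : ℝ × ℝ → E) (u : ℝ × ℝ) : E :=
  fderiv ℝ g u (0, 1)

private lemma hasFDerivAt_pd {E : Type*} [NormedAddCommGroup E] [NormedSpace ℝ E]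
    (g : ℝ × ℝ → E) (hg : ContDiff ℝ 2 g) (w : ℝ × ℝ) (u : ℝ × ℝ) :
    HasFDerivAt (fun v => fderiv ℝ g v w)
      ((ContinuousLinearMap.apply ℝ E w).comp (fderiv ℝ (fderiv ℝ g) u)) u := by
  have h1 : ContDiff ℝ 1 (fderiv ℝ g) := hg.fderiv_right (by norm_num)
  have h2 : HasFDerivAt (fderiv ℝ g) (fderiv ℝ (fderiv ℝ g) u) u :=
    (h1.differentiable one_ne_zero u).hasFDerivAt
  exact ((ContinuousLinearMap.apply ℝ E w).hasFDerivAt).comp u h2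

/-- Smooth Koenigs nets and duality: the one-form `df*` with
`∂₁f* = ∂₁f/ν²`, `∂₂f* = −∂₂f/ν²` is closed at `u` iff `f` satisfies the
Koenigs equation `∂₁∂₂f = (∂₂ν/ν)∂₁f + (∂₁ν/ν)∂₂f` at `u`. -/
theorem koenigs_dual_closedness {N : ℕ} (hN : 1 ≤ N)
    (f : ℝ × ℝ → EuclideanSpace ℝ (Fin N)) (ν : ℝ × ℝ → ℝ)
    (hf : ContDiff ℝ 2 f) (hν : ContDiff ℝ 2 ν) (hν0 : ∀ u, ν u ≠ 0)
    (u : ℝ × ℝ) :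
    pd2 (fun v => ((ν v) ^ 2)⁻¹ • pd1 f v) u +
        pd1 (fun v => ((ν v) ^ 2)⁻¹ • pd2 f v) u = 0 ↔
      pd1 (fun v => pd2 f v) u =
        (pd2 ν u / ν u) • pd1 f u + (pd1 ν u / ν u) • pd2 f u := by
  have hn0 : ν u ≠ 0 := hν0 u
  -- derivative of the coefficient (ν²)⁻¹
  have hνd : HasFDerivAt ν (fderiv ℝ ν u) u :=
    (hν.differentiable (by norm_num) u).hasFDerivAt
  have hsq : HasFDerivAt (fun v => ν v ^ 2) ((2 * ν u) • fderiv ℝ ν u) u := by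
    have h := hνd.mul hνd
    have : (fun v => ν v ^ 2) = fun v => ν v * ν v := by funext v; ring
    rw [this]
    refine h.congr_fderiv ?_
    ext <;> simp <;> ring
  have hinv : HasDerivAt (fun x : ℝ => x⁻¹) (-((ν u ^ 2) ^ 2)⁻¹) (ν u ^ 2) :=
    hasDerivAt_inv (pow_ne_zero 2 hn0)
  have hc : HasFDerivAt (fun v => ((ν v) ^ 2)⁻¹)
      ((-((ν u ^ 2) ^ 2)⁻¹) • ((2 * ν u) • fderiv ℝ ν u)) u :=
    hinv.comp_hasFDerivAt u hsq
  -- second derivative of f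
  have hF' := hasFDerivAt_pd f hf (1,0) u
  have hG' := hasFDerivAt_pd f hf (0,1) u
  -- symmetry of the second derivative
  have hsymm : fderiv ℝ (fderiv ℝ f) u (0,1) (1,0)
      = fderiv ℝ (fderiv ℝ f) u (1,0) (0,1) := by
    refine second_derivative_symmetric (f' := fderiv ℝ f) (x := u)
      (fun y => (hf.differentiable (by norm_num) y).hasFDerivAt) ?_ _ _
    exact (((hf.fderiv_right (m := 1) (by norm_num)).differentiable one_ne_zero) u).hasFDerivAt
  -- compute the two partial derivatives in the statement
  have h1 : pd2 (fun v => ((ν v) ^ 2)⁻¹ • pd1 f v) u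
      = (-(((ν u) ^ 2) ^ 2)⁻¹ * (2 * ν u * fderiv ℝ ν u (0,1))) • pd1 f u
        + ((ν u) ^ 2)⁻¹ • fderiv ℝ (fderiv ℝ f) u (1,0) (0,1) := by
    have h : fderiv ℝ (fun v => (ν v ^ 2)⁻¹ • (fderiv ℝ f v) (1, 0)) u = _ := (hc.smul hF').fderiv
    simp only [pd2, pd1]
    rw [h]
    simp only [ContinuousLinearMap.add_apply, ContinuousLinearMap.smul_apply,
      ContinuousLinearMap.smulRight_apply, ContinuousLinearMap.comp_apply,
      ContinuousLinearMap.apply_apply, ContinuousLinearMap.coe_smul', Pi.smul_apply]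
    rw [hsymm]
    match_scalars <;> simp only [smul_eq_mul] <;> ring
  have h2 : pd1 (fun v => ((ν v) ^ 2)⁻¹ • pd2 f v) u
      = (-(((ν u) ^ 2) ^ 2)⁻¹ * (2 * ν u * fderiv ℝ ν u (1,0))) • pd2 f u
        + ((ν u) ^ 2)⁻¹ • fderiv ℝ (fderiv ℝ f) u (1,0) (0,1) := by
    have h : fderiv ℝ (fun v => (ν v ^ 2)⁻¹ • (fderiv ℝ f v) (0, 1)) u = _ := (hc.smul hG').fderiv
    simp only [pd1, pd2]
    rw [h]
    simp only [ContinuousLinearMap.add_apply, ContinuousLinearMap.smul_apply,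
      ContinuousLinearMap.smulRight_apply, ContinuousLinearMap.comp_apply,
      ContinuousLinearMap.apply_apply, ContinuousLinearMap.coe_smul', Pi.smul_apply]
    match_scalars <;> simp only [smul_eq_mul] <;> ring
  have h3 : pd1 (fun v => pd2 f v) u = fderiv ℝ (fderiv ℝ f) u (1,0) (0,1) := by
    simp only [pd1, pd2]
    rw [hG'.fderiv]; rfl
  rw [h1, h2, h3]
  have key : (-(((ν u) ^ 2) ^ 2)⁻¹ * (2 * ν u * fderiv ℝ ν u (0,1))) • pd1 f u
        + ((ν u) ^ 2)⁻¹ • fderiv ℝ (fderiv ℝ f) u (1,0) (0,1)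
      + ((-(((ν u) ^ 2) ^ 2)⁻¹ * (2 * ν u * fderiv ℝ ν u (1,0))) • pd2 f u
        + ((ν u) ^ 2)⁻¹ • fderiv ℝ (fderiv ℝ f) u (1,0) (0,1))
      = (2 * ((ν u) ^ 2)⁻¹) • (fderiv ℝ (fderiv ℝ f) u (1,0) (0,1)
          - ((fderiv ℝ ν u (0,1) / ν u) • pd1 f u
            + (fderiv ℝ ν u (1,0) / ν u) • pd2 f u)) := by
    match_scalars <;> field_simp <;> ring
  have hab1 : pd2 ν u = fderiv ℝ ν u (0,1) := rfl
  have hab2 : pd1 ν u = fderiv ℝ ν u (1,0) := rfl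
  rw [key, hab1, hab2]
  have hcoef : (2 * ((ν u) ^ 2)⁻¹ : ℝ) ≠ 0 := by positivity
  constructor
  · intro h
    exact sub_eq_zero.mp ((smul_eq_zero.mp h).resolve_left hcoef)
  · intro h
    rw [h]
    simp
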